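/- If ⟨M₁,M₂⟩ ⇒_E N (a parallel η/SP-expansion from a pair), then for each i ∈ {1,2} there exists Pᵢ such that πᵢN →_R* Pᵢ and Mᵢ ⇒_E Pᵢ. -/

import Mathlib

/-- Untyped lambda terms with pairing and projections, de Bruijn representation
(so terms are automatically identified up to alpha-equivalence). -/
inductive Tm : Type
  | var : Nat → Tm
  | app : Tm → Tm → Tm
  | lam : Tm → Tm
  | pair : Tm → Tm → Tm
  | p1 : Tm → Tm
  | p2 : Tm → Tm

/-- Shift free de Bruijn indices ≥ d up by one. -/
def Tm.lift (d : Nat) : Tm → Tm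
  | .var n => if n < d then .var n else .var (n + 1)
  | .app a b => .app (a.lift d) (b.lift d)
  | .lam a => .lam (a.lift (d + 1))
  | .pair a b => .pair (a.lift d) (b.lift d)
  | .p1 a => .p1 (a.lift d)
  | .p2 a => .p2 (a.lift d)

/-- Capture-avoiding substitution of s for variable k. -/
def Tm.subst : Tm → Nat → Tm → Tm
  | .var n, k, s => if n = k then s else if n < k then .var n else .var (n - 1)
  | .app a b, k, s => .app (a.subst k s) (b.subst k s)
  | .lam a, k, s => .lam (a.subst (k + 1) (s.lift 0))
  | .pair a b, k, s => .pair (a.subst k s) (b.subst k s)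
  | .p1 a, k, s => .p1 (a.subst k s)
  | .p2 a, k, s => .p2 (a.subst k s)

/-- One-step R-reduction: compatible closure of (β), (π₁), (π₂), (δπ), (π₁λ), (π₂λ). -/
inductive StepR : Tm → Tm → Prop
  | beta {M N} : StepR (.app (.lam M) N) (M.subst 0 N)
  | pi1 {M N} : StepR (.p1 (.pair M N)) M
  | pi2 {M N} : StepR (.p2 (.pair M N)) N
  | dpi {M N P} : StepR (.app (.pair M N) P) (.pair (.app M P) (.app N P))
  | pi1lam {M} : StepR (.p1 (.lam M)) (.lam (.p1 M))
  | pi2lam {M} : StepR (.p2 (.lam M)) (.lam (.p2 M))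
  | lam {M M'} : StepR M M' → StepR (.lam M) (.lam M')
  | appL {M M' N} : StepR M M' → StepR (.app M N) (.app M' N)
  | appR {M N N'} : StepR N N' → StepR (.app M N) (.app M N')
  | pairL {M M' N} : StepR M M' → StepR (.pair M N) (.pair M' N)
  | pairR {M N N'} : StepR N N' → StepR (.pair M N) (.pair M N')
  | p1 {M M'} : StepR M M' → StepR (.p1 M) (.p1 M')
  | p2 {M M'} : StepR M M' → StepR (.p2 M) (.p2 M')

/-- Parallel η/SP-expansion. -/
inductive ParE : Tm → Tm → Prop
  | refl {M} : ParE M M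
  | lam {M M'} : ParE M M' → ParE (.lam M) (.lam M')
  | app {M M' N N'} : ParE M M' → ParE N N' → ParE (.app M N) (.app M' N')
  | pair {M M' N N'} : ParE M M' → ParE N N' → ParE (.pair M N) (.pair M' N')
  | p1 {M M'} : ParE M M' → ParE (.p1 M) (.p1 M')
  | p2 {M M'} : ParE M M' → ParE (.p2 M) (.p2 M')
  | eta {M M'} : ParE M M' → ParE M (.lam (.app (M'.lift 0) (.var 0)))
  | sp {M M'} : ParE M M' → ParE M (.pair (.p1 M') (.p2 M'))

section
variable {M₁ M₂ : Tm}

theorem Tm.lift_lift : ∀ (N : Tm) (i j : Nat), i ≤ j → (N.lift i).lift (j+1) = (N.lift j).lift i := by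
  intro N
  induction N with
  | var n => intro i j hij; simp only [Tm.lift]; split_ifs <;> simp [Tm.lift] <;> split_ifs <;> (try rfl) <;> omega
  | app a b iha ihb => intro i j hij; simp [Tm.lift, iha _ _ hij, ihb _ _ hij]
  | lam a iha => intro i j hij; simp [Tm.lift]; exact iha (i+1) (j+1) (by omega)
  | pair a b iha ihb => intro i j hij; simp [Tm.lift, iha _ _ hij, ihb _ _ hij]
  | p1 a iha => intro i j hij; simp [Tm.lift, iha _ _ hij]
  | p2 a iha => intro i j hij; simp [Tm.lift, iha _ _ hij]

theorem Tm.lift_subst : ∀ (M : Tm) (N : Tm) (k d : Nat), k ≤ d →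
    (M.subst k N).lift d = (M.lift (d+1)).subst k (N.lift d) := by
  intro M
  induction M with
  | var n =>
      intro N k d hkd
      simp only [Tm.subst, Tm.lift]
      split_ifs <;> simp [Tm.subst, Tm.lift] <;> split_ifs <;> (try rfl) <;> (try omega) <;>
        (try (congr 1; omega))
  | app a b iha ihb => intro N k d h; simp [Tm.subst, Tm.lift, iha _ _ _ h, ihb _ _ _ h]
  | lam a iha =>
      intro N k d h
      simp only [Tm.subst, Tm.lift]
      rw [iha _ (k+1) (d+1) (by omega), Tm.lift_lift N 0 d (by omega)]
  | pair a b iha ihb => intro N k d h; simp [Tm.subst, Tm.lift, iha _ _ _ h, ihb _ _ _ h]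
  | p1 a iha => intro N k d h; simp [Tm.subst, Tm.lift, iha _ _ _ h]
  | p2 a iha => intro N k d h; simp [Tm.subst, Tm.lift, iha _ _ _ h]

theorem Tm.lift_subst_var : ∀ (Q : Tm) (d : Nat), (Q.lift (d+1)).subst d (.var d) = Q := by
  intro Q
  induction Q with
  | var n => intro d; simp only [Tm.lift]; split_ifs <;> simp [Tm.subst] <;> split_ifs <;> (try rfl) <;> (try omega) <;> (try (congr 1; omega))
  | app a b iha ihb => intro d; simp [Tm.subst, Tm.lift, iha, ihb]
  | lam a iha => intro d; simp only [Tm.subst, Tm.lift]; rw [if_neg (Nat.not_lt_zero d), iha (d+1)]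
  | pair a b iha ihb => intro d; simp [Tm.subst, Tm.lift, iha, ihb]
  | p1 a iha => intro d; simp [Tm.subst, Tm.lift, iha]
  | p2 a iha => intro d; simp [Tm.subst, Tm.lift, iha]

theorem StepR.lift {a b : Tm} (h : StepR a b) : ∀ d, StepR (a.lift d) (b.lift d) := by
  induction h with
  | @beta M N => intro d; simp only [Tm.lift]; rw [Tm.lift_subst M N 0 d (by omega)]; exact StepR.beta
  | pi1 => intro d; exact StepR.pi1
  | pi2 => intro d; exact StepR.pi2
  | dpi => intro d; exact StepR.dpi
  | pi1lam => intro d; exact StepR.pi1lam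
  | pi2lam => intro d; exact StepR.pi2lam
  | lam _ ih => intro d; exact StepR.lam (ih (d+1))
  | appL _ ih => intro d; exact StepR.appL (ih d)
  | appR _ ih => intro d; exact StepR.appR (ih d)
  | pairL _ ih => intro d; exact StepR.pairL (ih d)
  | pairR _ ih => intro d; exact StepR.pairR (ih d)
  | p1 _ ih => intro d; exact StepR.p1 (ih d)
  | p2 _ ih => intro d; exact StepR.p2 (ih d)

abbrev RTG := Relation.ReflTransGen StepR

theorem RTG.lam' {a b : Tm} (h : RTG a b) : RTG (.lam a) (.lam b) :=
  Relation.ReflTransGen.lift Tm.lam (fun _ _ => StepR.lam) _ _ h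

theorem RTG.p1' {a b : Tm} (h : RTG a b) : RTG (.p1 a) (.p1 b) :=
  Relation.ReflTransGen.lift Tm.p1 (fun _ _ => StepR.p1) _ _ h

theorem RTG.p2' {a b : Tm} (h : RTG a b) : RTG (.p2 a) (.p2 b) :=
  Relation.ReflTransGen.lift Tm.p2 (fun _ _ => StepR.p2) _ _ h

theorem RTG.appL' {a b N : Tm} (h : RTG a b) : RTG (.app a N) (.app b N) :=
  Relation.ReflTransGen.lift (fun x => Tm.app x N) (fun _ _ h => StepR.appL h) _ _ h

theorem RTG.pair' {a b c d : Tm} (h1 : RTG a b) (h2 : RTG c d) : RTG (.pair a c) (.pair b d) :=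
  (Relation.ReflTransGen.lift (fun x => Tm.pair x c) (fun _ _ h => StepR.pairL h) _ _ h1).trans
  (Relation.ReflTransGen.lift (fun x => Tm.pair b x) (fun _ _ h => StepR.pairR h) _ _ h2)

theorem RTG.lift' {a b : Tm} (h : RTG a b) (d : Nat) : RTG (a.lift d) (b.lift d) :=
  Relation.ReflTransGen.lift (fun x => Tm.lift d x) (fun _ _ h => StepR.lift h d) _ _ h

theorem aux {M N : Tm} (h : ParE M N) : ∀ M₁ M₂, M = .pair M₁ M₂ →
    (∃ A B, RTG N (.pair A B) ∧ ParE M₁ A ∧ ParE M₂ B) ∨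
    (∃ A B, RTG N (.lam (.pair A B)) ∧ ParE M₁ (.lam A) ∧ ParE M₂ (.lam B)) := by
  induction h with
  | refl => intro M₁ M₂ he; subst he; exact Or.inl ⟨M₁, M₂, .refl, .refl, .refl⟩
  | lam _ _ => intro M₁ M₂ he; cases he
  | app _ _ _ _ => intro M₁ M₂ he; cases he
  | pair h1 h2 _ _ =>
      intro M₁ M₂ he; cases he
      exact Or.inl ⟨_, _, .refl, h1, h2⟩
  | p1 _ _ => intro M₁ M₂ he; cases he
  | p2 _ _ => intro M₁ M₂ he; cases he
  | @eta M M' _ ih =>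
      intro M₁ M₂ he
      rcases ih M₁ M₂ he with ⟨A, B, hr, h1, h2⟩ | ⟨A, B, hr, h1, h2⟩
      · -- M' →* pair A B ; N = lam (app (M'.lift 0) (var 0))
        right
        refine ⟨.app (A.lift 0) (.var 0), .app (B.lift 0) (.var 0), ?_, .eta h1, .eta h2⟩
        have : RTG (Tm.app (M'.lift 0) (.var 0)) (.pair (.app (A.lift 0) (.var 0)) (.app (B.lift 0) (.var 0))) := by
          refine Relation.ReflTransGen.trans (RTG.appL' ?_) (Relation.ReflTransGen.single StepR.dpi)
          have := hr.lift' 0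
          simpa [Tm.lift] using this
        exact RTG.lam' this
      · -- M' →* lam (pair A B)
        right
        refine ⟨A, B, ?_, h1, h2⟩
        have h3 : RTG (Tm.app (M'.lift 0) (.var 0)) (.pair A B) := by
          have hl := hr.lift' 0
          simp only [Tm.lift] at hl
          refine Relation.ReflTransGen.trans (RTG.appL' hl) ?_
          have hb : StepR (Tm.app (.lam (Tm.pair (A.lift 1) (B.lift 1))) (.var 0))
              (((Tm.pair (A.lift 1) (B.lift 1))).subst 0 (.var 0)) := StepR.beta
          have he2 : ((Tm.pair (A.lift 1) (B.lift 1))).subst 0 (.var 0) = Tm.pair A B := by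
            simp [Tm.subst, Tm.lift_subst_var A 0, Tm.lift_subst_var B 0]
          rw [he2] at hb
          exact Relation.ReflTransGen.single hb
        exact RTG.lam' h3
  | @sp M M' _ ih =>
      intro M₁ M₂ he
      rcases ih M₁ M₂ he with ⟨A, B, hr, h1, h2⟩ | ⟨A, B, hr, h1, h2⟩
      · left
        refine ⟨A, B, ?_, h1, h2⟩
        exact RTG.pair'
          ((hr.p1').trans (Relation.ReflTransGen.single StepR.pi1))
          ((hr.p2').trans (Relation.ReflTransGen.single StepR.pi2))
      · left
        refine ⟨.lam A, .lam B, ?_, h1, h2⟩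
        exact RTG.pair'
          ((hr.p1').trans ((Relation.ReflTransGen.single StepR.pi1lam).trans
            (RTG.lam' (Relation.ReflTransGen.single StepR.pi1))))
          ((hr.p2').trans ((Relation.ReflTransGen.single StepR.pi2lam).trans
            (RTG.lam' (Relation.ReflTransGen.single StepR.pi2))))

end


/-- If ⟨M₁,M₂⟩ ⇒_E N then for each i ∈ {1,2} there is Pᵢ with πᵢN →_R* Pᵢ and Mᵢ ⇒_E Pᵢ. -/
theorem parE_pair_proj (M₁ M₂ N : Tm) (h : ParE (.pair M₁ M₂) N) :
    (∃ P, Relation.ReflTransGen StepR (.p1 N) P ∧ ParE M₁ P) ∧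
    (∃ P, Relation.ReflTransGen StepR (.p2 N) P ∧ ParE M₂ P) := by
  rcases aux h M₁ M₂ rfl with ⟨A, B, hr, h1, h2⟩ | ⟨A, B, hr, h1, h2⟩
  · exact ⟨⟨A, (hr.p1').trans (Relation.ReflTransGen.single StepR.pi1), h1⟩,
      ⟨B, (hr.p2').trans (Relation.ReflTransGen.single StepR.pi2), h2⟩⟩
  · exact ⟨⟨.lam A, (hr.p1').trans ((Relation.ReflTransGen.single StepR.pi1lam).trans
        (RTG.lam' (Relation.ReflTransGen.single StepR.pi1))), h1⟩,
      ⟨.lam B, (hr.p2').trans ((Relation.ReflTransGen.single StepR.pi2lam).trans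
        (RTG.lam' (Relation.ReflTransGen.single StepR.pi2))), h2⟩⟩
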